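/- Let $\alpha > 0$, $\beta > \alpha$, and define $f(t) = (-t)^{-\beta}$ for $t < 0$, $f(t) = 0$ for $t \ge 0$. Then for every $p < 0$, $(\mathrm{I}^{\alpha}f)(p) = \frac{\Gamma(\beta - \alpha)}{\Gamma(\beta)} (-p)^{\alpha - \beta}$. -/

import Mathlib

open MeasureTheory

/-- Liouville fractional integral of an `ℝ≥0∞`-valued function. -/
noncomputable def liouvilleIE (α : ℝ) (f : ℝ → ENNReal) (x : ℝ) : ENNReal :=
  ENNReal.ofReal (1 / Real.Gamma α) *
    ∫⁻ t in Set.Iio x, f t * ENNReal.ofReal ((x - t) ^ (α - 1))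

/-- Liouville fractional integral `(I^α f)(x) = Γ(α)⁻¹ ∫_{-∞}^x f(t) (x-t)^{α-1} dt`,
valued in `[0,∞]`. -/
noncomputable def liouvilleI (α : ℝ) (f : ℝ → ℝ) (x : ℝ) : ENNReal :=
  liouvilleIE α (fun t => ENNReal.ofReal (f t)) x

lemma realBeta (a b : ℝ) (ha : 0 < a) (hb : 0 < b) :
    ∫ x in (0:ℝ)..1, x ^ (a - 1) * (1 - x) ^ (b - 1) =
      Real.Gamma a * Real.Gamma b / Real.Gamma (a + b) := by
  have key := Complex.Gamma_mul_Gamma_eq_betaIntegral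
    (s := (a:ℂ)) (t := (b:ℂ)) (by simpa using ha) (by simpa using hb)
  have hbeta : Complex.betaIntegral (a:ℂ) (b:ℂ) =
      ((∫ x in (0:ℝ)..1, x ^ (a - 1) * (1 - x) ^ (b - 1) : ℝ) : ℂ) := by
    rw [Complex.betaIntegral, ← intervalIntegral.integral_ofReal]
    apply intervalIntegral.integral_congr
    intro x hx
    rw [Set.uIcc_of_le (by norm_num : (0:ℝ) ≤ 1)] at hx
    have hx0 : (0:ℝ) ≤ x := hx.1
    have hx1 : (0:ℝ) ≤ 1 - x := by linarith [hx.2]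
    simp only []
    rw [Complex.ofReal_mul, Complex.ofReal_cpow hx0, Complex.ofReal_cpow hx1]
    push_cast
    ring
  rw [hbeta] at key
  have hG : Complex.Gamma ((a:ℂ)) = (Real.Gamma a : ℂ) := Complex.Gamma_ofReal a
  have hG2 : Complex.Gamma ((b:ℂ)) = (Real.Gamma b : ℂ) := Complex.Gamma_ofReal b
  have hG3 : Complex.Gamma ((a:ℂ) + b) = (Real.Gamma (a + b) : ℂ) := by
    rw [← Complex.ofReal_add, Complex.Gamma_ofReal]
  rw [hG, hG2, hG3, ← Complex.ofReal_mul, ← Complex.ofReal_mul] at key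
  have := Complex.ofReal_injective key
  have hpos : Real.Gamma (a + b) ≠ 0 := (Real.Gamma_pos_of_pos (by linarith)).ne'
  field_simp
  linarith [this]

lemma realBetaIntegrable (a b : ℝ) (ha : 0 < a) (hb : 0 < b) :
    IntegrableOn (fun x : ℝ => x ^ (a - 1) * (1 - x) ^ (b - 1)) (Set.Ioo 0 1) := by
  have h := (Complex.betaIntegral_convergent (u := (a:ℂ)) (v := (b:ℂ))
    (by simpa using ha) (by simpa using hb))
  rw [intervalIntegrable_iff_integrableOn_Ioo_of_le (by norm_num : (0:ℝ) ≤ 1)] at h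
  have heq : Set.EqOn (fun x : ℝ => (((x ^ (a - 1) * (1 - x) ^ (b - 1) : ℝ)) : ℂ))
      (fun x : ℝ => (x:ℂ) ^ ((a:ℂ) - 1) * (1 - (x:ℂ)) ^ ((b:ℂ) - 1)) (Set.Ioo 0 1) := by
    intro x hx
    simp only []
    rw [Complex.ofReal_mul, Complex.ofReal_cpow hx.1.le, Complex.ofReal_cpow (by linarith [hx.2])]
    push_cast
    ring
  have h2 : IntegrableOn (fun x : ℝ => (((x ^ (a - 1) * (1 - x) ^ (b - 1) : ℝ)) : ℂ))
      (Set.Ioo 0 1) := h.congr_fun heq.symm measurableSet_Ioo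
  simpa [IntegrableOn] using h2.re

lemma lintegralBeta (a b : ℝ) (ha : 0 < a) (hb : 0 < b) :
    ∫⁻ x in Set.Ioo (0:ℝ) 1, ENNReal.ofReal (x ^ (a - 1) * (1 - x) ^ (b - 1)) =
      ENNReal.ofReal (Real.Gamma a * Real.Gamma b / Real.Gamma (a + b)) := by
  rw [← realBeta a b ha hb, intervalIntegral.integral_of_le (by norm_num : (0:ℝ) ≤ 1),
    MeasureTheory.integral_Ioc_eq_integral_Ioo,
    ofReal_integral_eq_lintegral_ofReal (realBetaIntegrable a b ha hb)]
  filter_upwards [ae_restrict_mem measurableSet_Ioo] with x hx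
  have h1 : (0:ℝ) < 1 - x := by linarith [hx.2]
  have h0 : (0:ℝ) < x := hx.1
  positivity

lemma lintegral_image_deriv {s : Set ℝ} {f f' : ℝ → ℝ} (hs : MeasurableSet s)
    (hf' : ∀ x ∈ s, HasDerivWithinAt f (f' x) s x) (hf : Set.InjOn f s) (g : ℝ → ENNReal) :
    ∫⁻ x in f '' s, g x = ∫⁻ x in s, ENNReal.ofReal |f' x| * g (f x) := by
  simpa only [ContinuousLinearMap.det_toSpanSingleton] using
    lintegral_image_eq_lintegral_abs_det_fderiv_mul volume hs
      (fun x hx => (hf' x hx).hasFDerivWithinAt) hf g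

theorem stmt12 (α β : ℝ) (hα : 0 < α) (hβ : α < β) (p : ℝ) (hp : p < 0) :
    liouvilleI α (fun t => if t < 0 then (-t) ^ (-β) else 0) p =
      ENNReal.ofReal (Real.Gamma (β - α) / Real.Gamma β * (-p) ^ (α - β)) := by
  have hc0 : (0:ℝ) < -p := by linarith
  rw [liouvilleI, liouvilleIE]
  have himg : (fun u : ℝ => p * u⁻¹) '' Set.Ioo 0 1 = Set.Iio p := by
    ext y
    constructor
    · rintro ⟨u, ⟨hu0, hu1⟩, rfl⟩
      have h1 : (1:ℝ) < u⁻¹ := (one_lt_inv₀ hu0).2 hu1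
      have := mul_pos (neg_pos.2 hp) (sub_pos.2 h1)
      simp only [Set.mem_Iio]
      nlinarith
    · intro hy
      simp only [Set.mem_Iio] at hy
      have hy0 : y < 0 := lt_trans hy hp
      refine ⟨p / y, ⟨div_pos_of_neg_of_neg hp hy0, (div_lt_one_of_neg hy0).2 hy⟩, ?_⟩
      field_simp
      exact mul_div_cancel_left₀ y hp.ne
  have hderiv : ∀ u ∈ Set.Ioo (0:ℝ) 1,
      HasDerivWithinAt (fun u : ℝ => p * u⁻¹) (p * (-((u:ℝ)^2)⁻¹)) (Set.Ioo 0 1) u := by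
    intro u hu
    exact ((hasDerivAt_inv hu.1.ne').const_mul p).hasDerivWithinAt
  have hinj : Set.InjOn (fun u : ℝ => p * u⁻¹) (Set.Ioo 0 1) := by
    intro u hu v hv h
    have : u⁻¹ = v⁻¹ := mul_left_cancel₀ hp.ne h
    exact inv_injective this
  rw [← himg, lintegral_image_deriv measurableSet_Ioo hderiv hinj]
  have hpt : ∀ u ∈ Set.Ioo (0:ℝ) 1,
      ENNReal.ofReal |p * (-((u:ℝ)^2)⁻¹)| *
        (ENNReal.ofReal (if p * u⁻¹ < 0 then (-(p * u⁻¹)) ^ (-β) else 0) *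
          ENNReal.ofReal ((p - p * u⁻¹) ^ (α - 1))) =
      ENNReal.ofReal ((-p) ^ (α - β) * (u ^ (β - α - 1) * (1 - u) ^ (α - 1))) := by
    intro u hu
    obtain ⟨hu0, hu1⟩ := hu
    have h1u : (0:ℝ) < 1 - u := by linarith
    have hneg : p * u⁻¹ < 0 := mul_neg_of_neg_of_pos hp (inv_pos.2 hu0)
    rw [if_pos hneg]
    have habs : |p * (-((u:ℝ)^2)⁻¹)| = (-p) * ((u:ℝ)^2)⁻¹ := by
      rw [abs_of_nonneg]; ring
      have := inv_pos.2 (pow_pos hu0 2)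
      nlinarith
    have hm : -(p * u⁻¹) = (-p) * u⁻¹ := by ring
    have hs : p - p * u⁻¹ = ((-p) * (1 - u)) / u := by field_simp; ring
    rw [habs, hm, hs]
    rw [← ENNReal.ofReal_mul (by positivity), ← ENNReal.ofReal_mul (by positivity)]
    congr 1
    have e1 : ((-p) * u⁻¹) ^ (-β) = (-p) ^ (-β) * u ^ β := by
      rw [Real.mul_rpow hc0.le (inv_nonneg.2 hu0.le), ← Real.rpow_neg_one u,
        ← Real.rpow_mul hu0.le]
      norm_num
    have e2 : (((-p) * (1 - u)) / u) ^ (α - 1)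
        = (-p) ^ (α - 1) * (1 - u) ^ (α - 1) * u ^ (1 - α) := by
      rw [Real.div_rpow (by positivity) hu0.le, Real.mul_rpow hc0.le h1u.le,
        div_eq_mul_inv, ← Real.rpow_neg hu0.le, neg_sub]
    have e3 : (-p) * ((u:ℝ)^2)⁻¹ = (-p) * u ^ (-2:ℝ) := by
      rw [← Real.rpow_natCast u 2, ← Real.rpow_neg hu0.le]
      norm_num
    rw [e1, e2, e3]
    rw [show α - β = 1 + (-β + (α - 1)) by ring,
      show β - α - 1 = (-2:ℝ) + (β + (1 - α)) by ring,
      Real.rpow_add hc0, Real.rpow_add hc0, Real.rpow_one,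
      Real.rpow_add hu0, Real.rpow_add hu0]
    ring
  rw [setLIntegral_congr_fun measurableSet_Ioo hpt]
  simp_rw [ENNReal.ofReal_mul (by positivity : (0:ℝ) ≤ (-p) ^ (α - β))]
  rw [lintegral_const_mul' _ _ ENNReal.ofReal_ne_top]
  have hbeta := lintegralBeta (β - α) α (by linarith) hα
  rw [show β - α + α = β by ring] at hbeta
  simp -failIfUnchanged only [show ∀ x : ℝ, x ^ (β - α - 1) * (1 - x) ^ (α - 1)
      = x ^ ((β - α) - 1) * (1 - x) ^ (α - 1) from fun x => rfl] at *
  rw [hbeta]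
  rw [← ENNReal.ofReal_mul (by positivity), ← ENNReal.ofReal_mul (by positivity)]
  congr 1
  have hΓ : (0:ℝ) < Real.Gamma α := Real.Gamma_pos_of_pos hα
  rw [div_mul_eq_mul_div, one_mul, div_eq_iff hΓ.ne']
  ring
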